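/- Let N ≥ 1 and n ≥ 3 be integers and ω = exp(2πi/N). For complex parameters r_1, ..., r_{m} and pairwise distinct b_1, ..., b_{m+1} with r_l^N ≠ b_k^N for all l, k, define S(r_1,...,r_m; b_1,...,b_{m+1}) = ∑_{(ρ_1,...,ρ_m) ∈ (ℤ/N)^m} ∏_{l=1}^{m} [ a_l ∏_{j=l+1}^{m} (a_l − a_j) / ∏_{k=1}^{m+1} (a_l − b_k) ], where a_l = r_l ω^{−ρ_l}. Then for r_1, ..., r_{n−2} and pairwise distinct b_1, ..., b_{n−1} with r_l^N ≠ b_k^N for all l, k: S(r_1,...,r_{n−2}; b_1,...,b_{n−1}) = N r_{n−2}^N ∑_{k=1}^{n−1} S(r_1,...,r_{n−3}; b_1,...,b_{k−1},b_{k+1},...,b_{n−1}) / ( (r_{n−2}^N − b_k^N) ∏_{s=1, s≠k}^{n−1} (b_k − b_s) ). -/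

import Mathlib

open Finset

/-- The phase sum `S(r₁,...,r_m; b₁,...,b_{m+1})` from the Appendix of the paper,
with `a_l = r_l ω^{-ρ_l}`. -/
noncomputable def phaseSum (N : ℕ) (ω : ℂ) (m : ℕ) (r : Fin m → ℂ)
    (b : Fin (m + 1) → ℂ) : ℂ :=
  ∑ ρ : Fin m → Fin N,
    ∏ l : Fin m,
      (r l * ω ^ (-((ρ l : ℕ) : ℤ)) *
        (∏ j ∈ Finset.univ.filter (fun j => l < j),
          (r l * ω ^ (-((ρ l : ℕ) : ℤ)) - r j * ω ^ (-((ρ j : ℕ) : ℤ)))) /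
        ∏ k : Fin (m + 1), (r l * ω ^ (-((ρ l : ℕ) : ℤ)) - b k))

open Polynomial

section Aux

lemma lagrangePF {n : ℕ} (b : Fin n → ℂ) (hb : Function.Injective b)
    (g : ℂ[X]) (hg : g.degree < n) (x : ℂ) (hx : ∀ k, x ≠ b k) :
    g.eval x / ∏ k, (x - b k) =
      ∑ k, g.eval (b k) / ((x - b k) * ∏ s ∈ univ.erase k, (b k - b s)) := by
  have hinj : Set.InjOn b (univ : Finset (Fin n)) := fun a _ c _ h => hb h
  have h := Lagrange.eq_interpolate (s := (univ : Finset (Fin n))) (v := b) hinj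
    (by simpa using hg)
  have hev := congrArg (eval x) h
  rw [Lagrange.interpolate_apply, eval_finset_sum] at hev
  simp only [eval_mul, eval_C, Lagrange.basis, eval_prod, Lagrange.basisDivisor,
    eval_sub, eval_X] at hev
  rw [hev, sum_div]
  refine sum_congr rfl fun k _ => ?_
  have hxk : x - b k ≠ 0 := sub_ne_zero.mpr (hx k)
  have hP : ∏ s ∈ univ.erase k, (b k - b s) ≠ 0 :=
    prod_ne_zero_iff.mpr fun s hs => sub_ne_zero.mpr (hb.ne (mem_erase.mp hs).1.symm)
  have hQ : ∏ s ∈ univ.erase k, (x - b s) ≠ 0 :=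
    prod_ne_zero_iff.mpr fun s _ => sub_ne_zero.mpr (hx s)
  have hsplit : ∏ j : Fin n, (x - b j) = (x - b k) * ∏ s ∈ univ.erase k, (x - b s) :=
    (Finset.mul_prod_erase univ _ (mem_univ k)).symm
  rw [hsplit, prod_mul_distrib]
  rw [div_eq_div_iff (by exact mul_ne_zero hxk hQ) (mul_ne_zero hxk hP)]
  have : ∏ s ∈ univ.erase k, (b k - b s)⁻¹ = (∏ s ∈ univ.erase k, (b k - b s))⁻¹ := by
    rw [← prod_inv_distrib]
  rw [this]
  field_simp

lemma lagrangeVanish {n : ℕ} (b : Fin (n + 1) → ℂ) (hb : Function.Injective b)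
    (g : ℂ[X]) (hg : g.degree < n) :
    ∑ k, g.eval (b k) / ∏ s ∈ univ.erase k, (b k - b s) = 0 := by
  obtain ⟨x, hx⟩ := (Set.finite_range b).infinite_compl.nonempty
  have hx : ∀ k, x ≠ b k := by
    intro k h; exact hx ⟨k, h.symm⟩
  have hdeg : ((X - C x) * g).degree < ((n + 1 : ℕ) : WithBot ℕ) := by
    rw [degree_mul, degree_X_sub_C]
    have h1 : (1 : WithBot ℕ) + ((n : ℕ) : WithBot ℕ) = ((n + 1 : ℕ) : WithBot ℕ) := by
      push_cast; ring
    rw [← h1]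
    exact WithBot.add_lt_add_left (show (1 : WithBot ℕ) ≠ ⊥ by simp) hg
  have h := lagrangePF b hb ((X - C x) * g) hdeg x hx
  simp only [eval_mul, eval_sub, eval_X, eval_C, sub_self, zero_mul, zero_div] at h
  rw [eq_comm] at h
  calc ∑ k, g.eval (b k) / ∏ s ∈ univ.erase k, (b k - b s)
      = -∑ k, ((b k - x) * g.eval (b k)) /
          ((x - b k) * ∏ s ∈ univ.erase k, (b k - b s)) := by
        rw [← sum_neg_distrib]
        refine sum_congr rfl fun k _ => ?_
        have hxk : x - b k ≠ 0 := sub_ne_zero.mpr (hx k)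
        rw [show (b k - x) = -(x - b k) by ring, neg_mul, neg_div, neg_neg,
          mul_div_mul_left _ _ hxk]
    _ = 0 := by rw [h, neg_zero]

lemma zpow_neg_nat_pow {N : ℕ} {ω : ℂ} (hω0 : ω ≠ 0) (hω1 : ω ^ N = 1) (ρ : ℕ) :
    (ω ^ (-(ρ : ℤ))) ^ N = 1 := by
  rw [← zpow_natCast (ω ^ (-(ρ : ℤ))), ← zpow_mul, mul_comm, zpow_mul, zpow_natCast, hω1,
    one_zpow]

lemma rootSum {N : ℕ} (hN : 1 ≤ N) {ω : ℂ} (hω : IsPrimitiveRoot ω N)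
    {r c : ℂ} (hrc : r ^ N ≠ c ^ N) :
    ∑ ρ : Fin N, (r * ω ^ (-((ρ : Fin N) : ℤ)) - c)⁻¹ =
      N * c ^ (N - 1) / (r ^ N - c ^ N) := by
  have hω0 : ω ≠ 0 := hω.ne_zero (by omega)
  have hω1 : ω ^ N = 1 := hω.pow_eq_one
  have hsub : r ^ N - c ^ N ≠ 0 := sub_ne_zero.mpr hrc
  have hapow : ∀ ρ : Fin N, (r * ω ^ (-((ρ : Fin N) : ℤ))) ^ N = r ^ N := by
    intro ρ; rw [mul_pow, zpow_neg_nat_pow hω0 hω1, mul_one]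
  have hterm : ∀ ρ : Fin N, (r * ω ^ (-((ρ : Fin N) : ℤ)) - c)⁻¹ =
      (∑ j ∈ Finset.range N, (r * ω ^ (-((ρ : Fin N) : ℤ))) ^ j * c ^ (N - 1 - j)) /
        (r ^ N - c ^ N) := by
    intro ρ
    set a := r * ω ^ (-((ρ : Fin N) : ℤ)) with ha
    have hac : a - c ≠ 0 := by
      intro h
      exact hrc (by rw [← hapow ρ, ← ha, sub_eq_zero.mp h])
    have hgs := geom_sum₂_mul a c N
    rw [← hapow ρ, ← ha] at hsub ⊢
    rw [eq_div_iff hsub, ← hgs, mul_comm _ (a - c), ← mul_assoc, mul_comm ((a-c)⁻¹) (a-c),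
      mul_inv_cancel₀ hac, one_mul]
  rw [Finset.sum_congr rfl fun ρ _ => hterm ρ, ← Finset.sum_div]
  congr 1
  rw [Finset.sum_comm]
  have hj : ∀ j ∈ Finset.range N,
      (∑ ρ : Fin N, (r * ω ^ (-((ρ : Fin N) : ℤ))) ^ j * c ^ (N - 1 - j)) =
        if j = 0 then (N : ℂ) * c ^ (N - 1) else 0 := by
    intro j hj
    have hxρ : ∀ ρ : Fin N, (r * ω ^ (-((ρ : Fin N) : ℤ))) ^ j =
        r ^ j * ((ω⁻¹) ^ j) ^ ((ρ : Fin N) : ℕ) := by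
      intro ρ
      rw [mul_pow, zpow_neg, zpow_natCast, ← inv_pow, ← pow_mul, ← pow_mul, mul_comm j]
    simp only [hxρ]
    rw [← Finset.sum_mul, ← Finset.mul_sum, Fin.sum_univ_eq_sum_range (fun i => ((ω⁻¹)^j)^i)]
    rcases eq_or_ne j 0 with rfl | hj0
    · simp
    · rw [if_neg hj0]
      have hne1 : (ω⁻¹) ^ j ≠ 1 := by
        rw [inv_pow]
        intro h
        rw [inv_eq_one] at h
        exact hω.pow_ne_one_of_pos_of_lt hj0 (Finset.mem_range.mp hj) h
      rw [geom_sum_eq hne1, pow_right_comm, inv_pow, hω1, inv_one, one_pow]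
      simp
  rw [Finset.sum_congr rfl hj, Finset.sum_ite_eq' (Finset.range N) 0,
    if_pos (Finset.mem_range.mpr (by omega))]

lemma innerSum {N : ℕ} (hN : 1 ≤ N) {ω : ℂ} (hω : IsPrimitiveRoot ω N)
    {n : ℕ} (A : Fin n → ℂ) (b : Fin (n + 2) → ℂ) (hb : Function.Injective b)
    (r : ℂ) (hrb : ∀ k, r ^ N ≠ (b k) ^ N) :
    ∑ x : Fin N, (r * ω ^ (-((x : Fin N) : ℤ)) * ∏ l, (A l - r * ω ^ (-((x : Fin N) : ℤ)))) /
        ∏ k, (r * ω ^ (-((x : Fin N) : ℤ)) - b k)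
      = N * r ^ N * ∑ k, (∏ l, (A l - b k)) /
          ((r ^ N - (b k) ^ N) * ∏ s ∈ univ.erase k, (b k - b s)) := by
  have hω0 : ω ≠ 0 := hω.ne_zero (by omega)
  have hω1 : ω ^ N = 1 := hω.pow_eq_one
  set g : ℂ[X] := X * ∏ l, (C (A l) - X) with hgdef
  have hgdeg : g.degree < ((n + 2 : ℕ) : WithBot ℕ) := by
    have hfac : ∀ l : Fin n, (C (A l) - X : ℂ[X]).degree = 1 := by
      intro l
      rw [show (C (A l) - X : ℂ[X]) = -(X - C (A l)) by ring, degree_neg, degree_X_sub_C]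
    rw [hgdef, degree_mul, degree_X, degree_prod]
    simp only [hfac]
    rw [Finset.sum_const, card_univ, Fintype.card_fin, nsmul_eq_mul, mul_one]
    have : (1 : WithBot ℕ) + (n : WithBot ℕ) = ((n + 1 : ℕ) : WithBot ℕ) := by push_cast; ring
    rw [this]
    exact_mod_cast Nat.lt_succ_self (n + 1)
  have hgev : ∀ y : ℂ, g.eval y = y * ∏ l, (A l - y) := by
    intro y
    simp [hgdef, eval_prod]
  have hapow : ∀ x : Fin N, (r * ω ^ (-((x : Fin N) : ℤ))) ^ N = r ^ N := by
    intro x; rw [mul_pow, zpow_neg_nat_pow hω0 hω1, mul_one]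
  have hane : ∀ (x : Fin N) (k : Fin (n + 2)), r * ω ^ (-((x : Fin N) : ℤ)) ≠ b k := by
    intro x k h
    exact hrb k (by rw [← hapow x, h])
  have hPne : ∀ k : Fin (n + 2), ∏ s ∈ univ.erase k, (b k - b s) ≠ 0 := fun k =>
    prod_ne_zero_iff.mpr fun s hs => sub_ne_zero.mpr (hb.ne (mem_erase.mp hs).1.symm)
  have hDne : ∀ k : Fin (n + 2), r ^ N - (b k) ^ N ≠ 0 := fun k => sub_ne_zero.mpr (hrb k)
  -- step 1: apply partial fractions to each x
  have step1 : ∀ x : Fin N,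
      (r * ω ^ (-((x : Fin N) : ℤ)) * ∏ l, (A l - r * ω ^ (-((x : Fin N) : ℤ)))) /
          ∏ k, (r * ω ^ (-((x : Fin N) : ℤ)) - b k)
        = ∑ k, ((b k * ∏ l, (A l - b k)) / ∏ s ∈ univ.erase k, (b k - b s)) *
            (r * ω ^ (-((x : Fin N) : ℤ)) - b k)⁻¹ := by
    intro x
    have h := lagrangePF b hb g hgdeg (r * ω ^ (-((x : Fin N) : ℤ))) (hane x)
    rw [hgev] at h
    rw [h]
    refine sum_congr rfl fun k _ => ?_
    rw [hgev, mul_comm (r * ω ^ (-((x : Fin N) : ℤ)) - b k), ← div_div, div_eq_mul_inv]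
  rw [Finset.sum_congr rfl fun x _ => step1 x, Finset.sum_comm]
  -- step 2: apply rootSum per k
  have step2 : ∀ k : Fin (n + 2),
      ∑ x : Fin N, ((b k * ∏ l, (A l - b k)) / ∏ s ∈ univ.erase k, (b k - b s)) *
          (r * ω ^ (-((x : Fin N) : ℤ)) - b k)⁻¹
        = ((b k * ∏ l, (A l - b k)) / ∏ s ∈ univ.erase k, (b k - b s)) *
            ((N : ℂ) * (b k) ^ (N - 1) / (r ^ N - (b k) ^ N)) := by
    intro k
    rw [← Finset.mul_sum, rootSum hN hω (hrb k)]
  rw [Finset.sum_congr rfl fun k _ => step2 k]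
  -- step 3: split b_k^N = r^N - (r^N - b_k^N) and use vanishing
  have hvan : ∑ k, (∏ l, (A l - b k)) / ∏ s ∈ univ.erase k, (b k - b s) = 0 := by
    have hdeg2 : (∏ l, (C (A l) - X) : ℂ[X]).degree < ((n + 1 : ℕ) : WithBot ℕ) := by
      have hfac : ∀ l : Fin n, (C (A l) - X : ℂ[X]).degree = 1 := by
        intro l
        rw [show (C (A l) - X : ℂ[X]) = -(X - C (A l)) by ring, degree_neg, degree_X_sub_C]
      rw [degree_prod]
      simp only [hfac]
      rw [Finset.sum_const, card_univ, Fintype.card_fin, nsmul_eq_mul, mul_one]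
      exact_mod_cast Nat.lt_succ_self n
    have h := lagrangeVanish b hb (∏ l, (C (A l) - X)) hdeg2
    simpa [eval_prod] using h
  have key : ∀ k : Fin (n + 2),
      ((b k * ∏ l, (A l - b k)) / ∏ s ∈ univ.erase k, (b k - b s)) *
          ((N : ℂ) * (b k) ^ (N - 1) / (r ^ N - (b k) ^ N))
        = (N : ℂ) * r ^ N * ((∏ l, (A l - b k)) /
            ((r ^ N - (b k) ^ N) * ∏ s ∈ univ.erase k, (b k - b s)))
          - (N : ℂ) * ((∏ l, (A l - b k)) / ∏ s ∈ univ.erase k, (b k - b s)) := by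
    intro k
    have hbk : (b k) ^ N = b k * (b k) ^ (N - 1) := by
      rw [← pow_succ']
      congr 1
      omega
    have hP := hPne k
    have hD := hDne k
    rw [hbk] at hD ⊢
    field_simp
    ring
  rw [Finset.sum_congr rfl fun k _ => key k, Finset.sum_sub_distrib, ← Finset.mul_sum,
    ← Finset.mul_sum, hvan, mul_zero, sub_zero]

end Aux

theorem phaseSum_recursion (N : ℕ) (hN : 1 ≤ N) (ω : ℂ)
    (hω : ω = Complex.exp (2 * (Real.pi : ℂ) * Complex.I / (N : ℂ)))
    (m : ℕ) (r : Fin (m + 1) → ℂ) (b : Fin (m + 2) → ℂ)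
    (hb : Function.Injective b)
    (hrb : ∀ l k, (r l) ^ N ≠ (b k) ^ N) :
    phaseSum N ω (m + 1) r b =
      (N : ℂ) * (r (Fin.last m)) ^ N *
        ∑ k : Fin (m + 2),
          phaseSum N ω m (fun l => r l.castSucc) (fun j => b (k.succAbove j)) /
            (((r (Fin.last m)) ^ N - (b k) ^ N) *
              ∏ s ∈ Finset.univ.erase k, (b k - b s)) := by
  classical
  have hN0 : N ≠ 0 := by omega
  have hωp : IsPrimitiveRoot ω N := by
    rw [hω]; exact Complex.isPrimitiveRoot_exp N hN0
  have hω0 : ω ≠ 0 := hωp.ne_zero hN0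
  have hω1 : ω ^ N = 1 := hωp.pow_eq_one
  have hapow : ∀ (c : ℂ) (i : Fin N), (c * ω ^ (-((i : ℕ) : ℤ))) ^ N = c ^ N := by
    intro c i; rw [mul_pow, zpow_neg_nat_pow hω0 hω1, mul_one]
  have hane : ∀ (l : Fin (m + 1)) (i : Fin N) (k : Fin (m + 2)),
      r l * ω ^ (-((i : ℕ) : ℤ)) - b k ≠ 0 := by
    intro l i k h
    exact hrb l k (by rw [← hapow (r l) i, sub_eq_zero.mp h])
  -- pointwise product splitting
  have hpoint : ∀ (x : Fin N) (ρ : Fin m → Fin N),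
      (∏ l : Fin (m + 1),
        (r l * ω ^ (-(((Fin.insertNth (α := fun _ => Fin N) (Fin.last m) x ρ) l : ℕ) : ℤ)) *
          (∏ j ∈ Finset.univ.filter (fun j => l < j),
            (r l * ω ^ (-(((Fin.insertNth (α := fun _ => Fin N) (Fin.last m) x ρ) l : ℕ) : ℤ)) -
              r j * ω ^ (-(((Fin.insertNth (α := fun _ => Fin N) (Fin.last m) x ρ) j : ℕ) : ℤ)))) /
          ∏ k : Fin (m + 2),
            (r l * ω ^ (-(((Fin.insertNth (α := fun _ => Fin N) (Fin.last m) x ρ) l : ℕ) : ℤ)) - b k)))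
      = (∏ l : Fin m,
          (r l.castSucc * ω ^ (-((ρ l : ℕ) : ℤ)) *
            (∏ j ∈ Finset.univ.filter (fun j => l < j),
              (r l.castSucc * ω ^ (-((ρ l : ℕ) : ℤ)) -
                r j.castSucc * ω ^ (-((ρ j : ℕ) : ℤ)))) /
            ∏ k : Fin (m + 2),
              (r l.castSucc * ω ^ (-((ρ l : ℕ) : ℤ)) - b k))) *
        ((r (Fin.last m) * ω ^ (-((x : ℕ) : ℤ)) *
            ∏ l : Fin m,
              (r l.castSucc * ω ^ (-((ρ l : ℕ) : ℤ)) -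
                r (Fin.last m) * ω ^ (-((x : ℕ) : ℤ)))) /
          ∏ k : Fin (m + 2), (r (Fin.last m) * ω ^ (-((x : ℕ) : ℤ)) - b k)) := by
    intro x ρ
    have hlast : Fin.insertNth (α := fun _ => Fin N) (Fin.last m) x ρ (Fin.last m) = x :=
      Fin.insertNth_apply_same _ _ _
    have hcs : ∀ j : Fin m, Fin.insertNth (α := fun _ => Fin N) (Fin.last m) x ρ j.castSucc = ρ j := by
      intro j
      rw [← Fin.succAbove_last_apply j]
      exact Fin.insertNth_apply_succAbove _ _ _ _
    rw [Fin.prod_univ_castSucc]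
    have hfilt : (Finset.univ.filter (fun j : Fin (m + 1) => Fin.last m < j)) = ∅ :=
      Finset.filter_eq_empty_iff.mpr (fun j _ => not_lt.mpr (Fin.le_last j))
    rw [hfilt, Finset.prod_empty, hlast]
    have hfac : ∀ l : Fin m,
        (∏ j ∈ Finset.univ.filter (fun j : Fin (m+1) => l.castSucc < j),
          (r l.castSucc * ω ^ (-(((Fin.insertNth (α := fun _ => Fin N) (Fin.last m) x ρ) l.castSucc : ℕ) : ℤ)) -
            r j * ω ^ (-(((Fin.insertNth (α := fun _ => Fin N) (Fin.last m) x ρ) j : ℕ) : ℤ))))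
        = (∏ j ∈ Finset.univ.filter (fun j : Fin m => l < j),
            (r l.castSucc * ω ^ (-((ρ l : ℕ) : ℤ)) -
              r j.castSucc * ω ^ (-((ρ j : ℕ) : ℤ)))) *
          (r l.castSucc * ω ^ (-((ρ l : ℕ) : ℤ)) -
            r (Fin.last m) * ω ^ (-((x : ℕ) : ℤ))) := by
      intro l
      rw [Finset.prod_filter, Fin.prod_univ_castSucc, hlast, hcs]
      simp only [hcs, Fin.castSucc_lt_castSucc_iff, Fin.castSucc_lt_last, if_true]
      rw [← Finset.prod_filter]
    simp only [hfac]
    simp only [hcs]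
    rw [show (∏ l : Fin m,
        (r l.castSucc * ω ^ (-((ρ l : ℕ) : ℤ)) *
          ((∏ j ∈ Finset.univ.filter (fun j : Fin m => l < j),
            (r l.castSucc * ω ^ (-((ρ l : ℕ) : ℤ)) -
              r j.castSucc * ω ^ (-((ρ j : ℕ) : ℤ)))) *
            (r l.castSucc * ω ^ (-((ρ l : ℕ) : ℤ)) -
              r (Fin.last m) * ω ^ (-((x : ℕ) : ℤ)))) /
          ∏ k : Fin (m + 2), (r l.castSucc * ω ^ (-((ρ l : ℕ) : ℤ)) - b k)))
      = (∏ l : Fin m,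
          (r l.castSucc * ω ^ (-((ρ l : ℕ) : ℤ)) *
            (∏ j ∈ Finset.univ.filter (fun j : Fin m => l < j),
              (r l.castSucc * ω ^ (-((ρ l : ℕ) : ℤ)) -
                r j.castSucc * ω ^ (-((ρ j : ℕ) : ℤ)))) /
            ∏ k : Fin (m + 2), (r l.castSucc * ω ^ (-((ρ l : ℕ) : ℤ)) - b k))) *
        ∏ l : Fin m,
          (r l.castSucc * ω ^ (-((ρ l : ℕ) : ℤ)) -
            r (Fin.last m) * ω ^ (-((x : ℕ) : ℤ))) from by
      rw [← Finset.prod_mul_distrib]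
      exact Finset.prod_congr rfl fun l _ => by ring]
    ring
  -- inner sum evaluation
  have hin : ∀ ρ : Fin m → Fin N,
      (∑ x : Fin N, (r (Fin.last m) * ω ^ (-((x : ℕ) : ℤ)) * ∏ l : Fin m, (r l.castSucc * ω ^ (-((ρ l : ℕ) : ℤ)) - r (Fin.last m) * ω ^ (-((x : ℕ) : ℤ)))) / ∏ k : Fin (m + 2), (r (Fin.last m) * ω ^ (-((x : ℕ) : ℤ)) - b k))
        = (N : ℂ) * (r (Fin.last m)) ^ N * ∑ k : Fin (m + 2), (∏ l : Fin m, (r l.castSucc * ω ^ (-((ρ l : ℕ) : ℤ)) - b k)) / (((r (Fin.last m)) ^ N - (b k) ^ N) * ∏ s ∈ Finset.univ.erase k, (b k - b s)) :=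
    fun ρ => innerSum hN hωp (fun l => r l.castSucc * ω ^ (-((ρ l : ℕ) : ℤ))) b hb (r (Fin.last m)) (fun k => hrb _ k)
  -- numerator cancellation
  have hnum : ∀ (ρ : Fin m → Fin N) (k : Fin (m + 2)),
      (∏ l : Fin m, (r l.castSucc * ω ^ (-((ρ l : ℕ) : ℤ)) * (∏ j ∈ Finset.univ.filter (fun j : Fin m => l < j), (r l.castSucc * ω ^ (-((ρ l : ℕ) : ℤ)) - r j.castSucc * ω ^ (-((ρ j : ℕ) : ℤ)))) / ∏ k : Fin (m + 2), (r l.castSucc * ω ^ (-((ρ l : ℕ) : ℤ)) - b k))) * (∏ l : Fin m, (r l.castSucc * ω ^ (-((ρ l : ℕ) : ℤ)) - b k))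
        = ∏ l : Fin m, (r l.castSucc * ω ^ (-((ρ l : ℕ) : ℤ)) * (∏ j ∈ Finset.univ.filter (fun j : Fin m => l < j), (r l.castSucc * ω ^ (-((ρ l : ℕ) : ℤ)) - r j.castSucc * ω ^ (-((ρ j : ℕ) : ℤ)))) / ∏ k' : Fin (m + 1), (r l.castSucc * ω ^ (-((ρ l : ℕ) : ℤ)) - b (k.succAbove k'))) := by
    intro ρ k
    rw [← Finset.prod_mul_distrib]
    refine Finset.prod_congr rfl fun l _ => ?_
    have hsplit : (∏ k : Fin (m + 2), (r l.castSucc * ω ^ (-((ρ l : ℕ) : ℤ)) - b k)) = (r l.castSucc * ω ^ (-((ρ l : ℕ) : ℤ)) - b k) * ∏ k' : Fin (m + 1), (r l.castSucc * ω ^ (-((ρ l : ℕ) : ℤ)) - b (k.succAbove k')) :=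
      Fin.prod_univ_succAbove (fun k' : Fin (m + 2) => r l.castSucc * ω ^ (-((ρ l : ℕ) : ℤ)) - b k') k
    have hc : r l.castSucc * ω ^ (-((ρ l : ℕ) : ℤ)) - b k ≠ 0 := hane l.castSucc (ρ l) k
    have hQ1 : (∏ k' : Fin (m + 1), (r l.castSucc * ω ^ (-((ρ l : ℕ) : ℤ)) - b (k.succAbove k'))) ≠ 0 :=
      Finset.prod_ne_zero_iff.mpr fun k' _ => hane l.castSucc (ρ l) (k.succAbove k')
    rw [hsplit, div_mul_eq_mul_div, mul_comm _ (r l.castSucc * ω ^ (-((ρ l : ℕ) : ℤ)) - b k),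
      mul_div_mul_left _ _ hc]
  have e1 : phaseSum N ω (m + 1) r b
      = ∑ x : Fin N, ∑ ρ : Fin m → Fin N, (∏ l : Fin m, (r l.castSucc * ω ^ (-((ρ l : ℕ) : ℤ)) * (∏ j ∈ Finset.univ.filter (fun j : Fin m => l < j), (r l.castSucc * ω ^ (-((ρ l : ℕ) : ℤ)) - r j.castSucc * ω ^ (-((ρ j : ℕ) : ℤ)))) / ∏ k : Fin (m + 2), (r l.castSucc * ω ^ (-((ρ l : ℕ) : ℤ)) - b k))) * ((r (Fin.last m) * ω ^ (-((x : ℕ) : ℤ)) * ∏ l : Fin m, (r l.castSucc * ω ^ (-((ρ l : ℕ) : ℤ)) - r (Fin.last m) * ω ^ (-((x : ℕ) : ℤ)))) / ∏ k : Fin (m + 2), (r (Fin.last m) * ω ^ (-((x : ℕ) : ℤ)) - b k)) := by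
    rw [phaseSum, ← Equiv.sum_comp (Fin.insertNthEquiv (fun _ : Fin (m + 1) => Fin N)
      (Fin.last m)), Fintype.sum_prod_type]
    simp only [Fin.insertNthEquiv_apply]
    exact Finset.sum_congr rfl fun x _ => Finset.sum_congr rfl fun ρ _ => hpoint x ρ
  have e2 : (∑ x : Fin N, ∑ ρ : Fin m → Fin N, (∏ l : Fin m, (r l.castSucc * ω ^ (-((ρ l : ℕ) : ℤ)) * (∏ j ∈ Finset.univ.filter (fun j : Fin m => l < j), (r l.castSucc * ω ^ (-((ρ l : ℕ) : ℤ)) - r j.castSucc * ω ^ (-((ρ j : ℕ) : ℤ)))) / ∏ k : Fin (m + 2), (r l.castSucc * ω ^ (-((ρ l : ℕ) : ℤ)) - b k))) * ((r (Fin.last m) * ω ^ (-((x : ℕ) : ℤ)) * ∏ l : Fin m, (r l.castSucc * ω ^ (-((ρ l : ℕ) : ℤ)) - r (Fin.last m) * ω ^ (-((x : ℕ) : ℤ)))) / ∏ k : Fin (m + 2), (r (Fin.last m) * ω ^ (-((x : ℕ) : ℤ)) - b k)))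
      = (N : ℂ) * (r (Fin.last m)) ^ N *
          ∑ k : Fin (m + 2), ∑ ρ : Fin m → Fin N, (∏ l : Fin m, (r l.castSucc * ω ^ (-((ρ l : ℕ) : ℤ)) * (∏ j ∈ Finset.univ.filter (fun j : Fin m => l < j), (r l.castSucc * ω ^ (-((ρ l : ℕ) : ℤ)) - r j.castSucc * ω ^ (-((ρ j : ℕ) : ℤ)))) / ∏ k : Fin (m + 2), (r l.castSucc * ω ^ (-((ρ l : ℕ) : ℤ)) - b k))) * ((∏ l : Fin m, (r l.castSucc * ω ^ (-((ρ l : ℕ) : ℤ)) - b k)) / (((r (Fin.last m)) ^ N - (b k) ^ N) * ∏ s ∈ Finset.univ.erase k, (b k - b s))) := by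
    rw [Finset.sum_comm]
    have h1 : ∀ ρ : Fin m → Fin N,
        (∑ x : Fin N, (∏ l : Fin m, (r l.castSucc * ω ^ (-((ρ l : ℕ) : ℤ)) * (∏ j ∈ Finset.univ.filter (fun j : Fin m => l < j), (r l.castSucc * ω ^ (-((ρ l : ℕ) : ℤ)) - r j.castSucc * ω ^ (-((ρ j : ℕ) : ℤ)))) / ∏ k : Fin (m + 2), (r l.castSucc * ω ^ (-((ρ l : ℕ) : ℤ)) - b k))) * ((r (Fin.last m) * ω ^ (-((x : ℕ) : ℤ)) * ∏ l : Fin m, (r l.castSucc * ω ^ (-((ρ l : ℕ) : ℤ)) - r (Fin.last m) * ω ^ (-((x : ℕ) : ℤ)))) / ∏ k : Fin (m + 2), (r (Fin.last m) * ω ^ (-((x : ℕ) : ℤ)) - b k)))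
          = (∏ l : Fin m, (r l.castSucc * ω ^ (-((ρ l : ℕ) : ℤ)) * (∏ j ∈ Finset.univ.filter (fun j : Fin m => l < j), (r l.castSucc * ω ^ (-((ρ l : ℕ) : ℤ)) - r j.castSucc * ω ^ (-((ρ j : ℕ) : ℤ)))) / ∏ k : Fin (m + 2), (r l.castSucc * ω ^ (-((ρ l : ℕ) : ℤ)) - b k))) * ((N : ℂ) * (r (Fin.last m)) ^ N * ∑ k : Fin (m + 2), (∏ l : Fin m, (r l.castSucc * ω ^ (-((ρ l : ℕ) : ℤ)) - b k)) / (((r (Fin.last m)) ^ N - (b k) ^ N) * ∏ s ∈ Finset.univ.erase k, (b k - b s))) := by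
      intro ρ
      rw [← Finset.mul_sum, hin ρ]
    rw [Finset.sum_congr rfl fun ρ _ => h1 ρ]
    calc ∑ ρ : Fin m → Fin N,
          (∏ l : Fin m, (r l.castSucc * ω ^ (-((ρ l : ℕ) : ℤ)) * (∏ j ∈ Finset.univ.filter (fun j : Fin m => l < j), (r l.castSucc * ω ^ (-((ρ l : ℕ) : ℤ)) - r j.castSucc * ω ^ (-((ρ j : ℕ) : ℤ)))) / ∏ k : Fin (m + 2), (r l.castSucc * ω ^ (-((ρ l : ℕ) : ℤ)) - b k))) * ((N : ℂ) * (r (Fin.last m)) ^ N * ∑ k : Fin (m + 2), (∏ l : Fin m, (r l.castSucc * ω ^ (-((ρ l : ℕ) : ℤ)) - b k)) / (((r (Fin.last m)) ^ N - (b k) ^ N) * ∏ s ∈ Finset.univ.erase k, (b k - b s)))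
        = ∑ ρ : Fin m → Fin N, ∑ k : Fin (m + 2),
            (N : ℂ) * (r (Fin.last m)) ^ N * ((∏ l : Fin m, (r l.castSucc * ω ^ (-((ρ l : ℕ) : ℤ)) * (∏ j ∈ Finset.univ.filter (fun j : Fin m => l < j), (r l.castSucc * ω ^ (-((ρ l : ℕ) : ℤ)) - r j.castSucc * ω ^ (-((ρ j : ℕ) : ℤ)))) / ∏ k : Fin (m + 2), (r l.castSucc * ω ^ (-((ρ l : ℕ) : ℤ)) - b k))) * ((∏ l : Fin m, (r l.castSucc * ω ^ (-((ρ l : ℕ) : ℤ)) - b k)) / (((r (Fin.last m)) ^ N - (b k) ^ N) * ∏ s ∈ Finset.univ.erase k, (b k - b s)))) := by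
          refine Finset.sum_congr rfl fun ρ _ => ?_
          rw [Finset.mul_sum, Finset.mul_sum]
          exact Finset.sum_congr rfl fun k _ => by ring
      _ = ∑ k : Fin (m + 2), ∑ ρ : Fin m → Fin N,
            (N : ℂ) * (r (Fin.last m)) ^ N * ((∏ l : Fin m, (r l.castSucc * ω ^ (-((ρ l : ℕ) : ℤ)) * (∏ j ∈ Finset.univ.filter (fun j : Fin m => l < j), (r l.castSucc * ω ^ (-((ρ l : ℕ) : ℤ)) - r j.castSucc * ω ^ (-((ρ j : ℕ) : ℤ)))) / ∏ k : Fin (m + 2), (r l.castSucc * ω ^ (-((ρ l : ℕ) : ℤ)) - b k))) * ((∏ l : Fin m, (r l.castSucc * ω ^ (-((ρ l : ℕ) : ℤ)) - b k)) / (((r (Fin.last m)) ^ N - (b k) ^ N) * ∏ s ∈ Finset.univ.erase k, (b k - b s)))) := Finset.sum_comm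
      _ = (N : ℂ) * (r (Fin.last m)) ^ N *
            ∑ k : Fin (m + 2), ∑ ρ : Fin m → Fin N, (∏ l : Fin m, (r l.castSucc * ω ^ (-((ρ l : ℕ) : ℤ)) * (∏ j ∈ Finset.univ.filter (fun j : Fin m => l < j), (r l.castSucc * ω ^ (-((ρ l : ℕ) : ℤ)) - r j.castSucc * ω ^ (-((ρ j : ℕ) : ℤ)))) / ∏ k : Fin (m + 2), (r l.castSucc * ω ^ (-((ρ l : ℕ) : ℤ)) - b k))) * ((∏ l : Fin m, (r l.castSucc * ω ^ (-((ρ l : ℕ) : ℤ)) - b k)) / (((r (Fin.last m)) ^ N - (b k) ^ N) * ∏ s ∈ Finset.univ.erase k, (b k - b s))) := by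
          rw [Finset.mul_sum]
          exact Finset.sum_congr rfl fun k _ => (Finset.mul_sum _ _ _).symm
  have e3 : ∀ k : Fin (m + 2),
      (∑ ρ : Fin m → Fin N, (∏ l : Fin m, (r l.castSucc * ω ^ (-((ρ l : ℕ) : ℤ)) * (∏ j ∈ Finset.univ.filter (fun j : Fin m => l < j), (r l.castSucc * ω ^ (-((ρ l : ℕ) : ℤ)) - r j.castSucc * ω ^ (-((ρ j : ℕ) : ℤ)))) / ∏ k : Fin (m + 2), (r l.castSucc * ω ^ (-((ρ l : ℕ) : ℤ)) - b k))) * ((∏ l : Fin m, (r l.castSucc * ω ^ (-((ρ l : ℕ) : ℤ)) - b k)) / (((r (Fin.last m)) ^ N - (b k) ^ N) * ∏ s ∈ Finset.univ.erase k, (b k - b s))))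
        = phaseSum N ω m (fun l => r l.castSucc) (fun j => b (k.succAbove j)) /
            (((r (Fin.last m)) ^ N - (b k) ^ N) *
              ∏ s ∈ Finset.univ.erase k, (b k - b s)) := by
    intro k
    rw [phaseSum, Finset.sum_div]
    refine Finset.sum_congr rfl fun ρ _ => ?_
    rw [← mul_div_assoc, hnum ρ k]
  rw [e1, e2]
  exact congrArg _ (Finset.sum_congr rfl fun k _ => e3 k)
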